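/- Let f : X → X be a polynomial map of a nonempty closed complex algebraic subset X of ℂ^N to itself that is open, with X − f(X) finite, and let Ω ⊆ X be a cofinite subset with f(Ω) ⊆ Ω. Let S = ⋂_{k>0} f^k(Ω) be the stable image. Then f(S) = S, i.e., the restriction of f to S is a surjective self-map of S (and it is open as a map from S to S). -/

import Mathlib

/-- The restriction of `f` to the stable image `S = ⋂_{k>0} f^k(Ω)` is a
surjective self-map of `S`, and it is open as a map from `S` to `S`. -/
theorem stable_image_surjective
    (N : ℕ) (P : Set (MvPolynomial (Fin N) ℂ))
    (X : Set (Fin N → ℂ))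
    (hX : X = {x | ∀ p ∈ P, MvPolynomial.eval x p = 0})
    (hXne : X.Nonempty)
    (F : (Fin N → ℂ) → (Fin N → ℂ))
    (hFpoly : ∃ q : Fin N → MvPolynomial (Fin N) ℂ,
      ∀ x i, F x i = MvPolynomial.eval x (q i))
    (hmaps : Set.MapsTo F X X)
    (hopen : IsOpenMap (Set.MapsTo.restrict F X X hmaps))
    (hcoim : (X \ F '' X).Finite)
    (Ω : Set (Fin N → ℂ)) (hΩX : Ω ⊆ X) (hΩcof : (X \ Ω).Finite)
    (hinv : F '' Ω ⊆ Ω) :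
    F '' (⋂ k > 0, F^[k] '' Ω) = ⋂ k > 0, F^[k] '' Ω ∧
    (∀ U : Set (Fin N → ℂ), IsOpen U →
      ∃ V : Set (Fin N → ℂ), IsOpen V ∧
        F '' (U ∩ ⋂ k > 0, F^[k] '' Ω) = V ∩ ⋂ k > 0, F^[k] '' Ω) := by
  classical
  set S : Set (Fin N → ℂ) := ⋂ k > 0, F^[k] '' Ω with hSdef
  have hmemS : ∀ z, z ∈ S ↔ ∀ k, 0 < k → z ∈ F^[k] '' Ω := by
    intro z
    rw [hSdef]
    exact Set.mem_iInter₂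
  have hstep' : ∀ m : ℕ, F^[m+1] '' Ω = F '' (F^[m] '' Ω) := by
    intro m
    rw [Function.iterate_succ', Set.image_comp]
  have hstep : ∀ m : ℕ, F^[m+1] '' Ω = F^[m] '' (F '' Ω) := by
    intro m
    rw [Function.iterate_succ, Set.image_comp]
  have hanti : ∀ m : ℕ, F^[m+1] '' Ω ⊆ F^[m] '' Ω := by
    intro m
    rw [hstep m]
    exact Set.image_mono hinv
  have hmono : ∀ a b : ℕ, a ≤ b → F^[b] '' Ω ⊆ F^[a] '' Ω := by
    intro a b hab
    induction hab with
    | refl => exact subset_rfl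
    | step _ ih => exact (hanti _).trans ih
  have hΩ0 : F^[0] '' Ω = Ω := by simp
  have hsubΩ : ∀ k : ℕ, F^[k] '' Ω ⊆ Ω := by
    intro k
    have h := hmono 0 k (Nat.zero_le k)
    rwa [hΩ0] at h
  have hsubX : ∀ k : ℕ, F^[k] '' Ω ⊆ X := fun k => (hsubΩ k).trans hΩX
  have hSΩ1 : S ⊆ F '' Ω := by
    intro z hz
    have h := (hmemS z).1 hz 1 Nat.one_pos
    simpa using h
  have hSΩ : S ⊆ Ω := fun z hz => hinv (hSΩ1 hz)
  have hSX : S ⊆ X := fun z hz => hΩX (hSΩ hz)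
  have hSR : ∀ k : ℕ, S ⊆ F^[k] '' Ω := by
    intro k
    cases k with
    | zero => rw [hΩ0]; exact hSΩ
    | succ m => exact fun z hz => (hmemS z).1 hz (m+1) (Nat.succ_pos m)
  have hFS : ∀ z ∈ S, F z ∈ S := by
    intro z hz
    refine (hmemS (F z)).2 ?_
    intro k hk
    obtain ⟨m, rfl⟩ : ∃ m, k = m + 1 := ⟨k - 1, by omega⟩
    rw [hstep' m]
    exact Set.mem_image_of_mem F (hSR m hz)
  have hFiter : ∀ (m : ℕ) (z), z ∈ S → F^[m] z ∈ S := by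
    intro m
    induction m with
    | zero => intro z hz; simpa using hz
    | succ n ih =>
      intro z hz
      rw [Function.iterate_succ_apply']
      exact hFS _ (ih z hz)
  have hEfin : ∀ k : ℕ, (X \ F^[k] '' Ω).Finite := by
    intro k
    induction k with
    | zero => rw [hΩ0]; exact hΩcof
    | succ n ih =>
      refine (hcoim.union (ih.image F)).subset ?_
      rintro x ⟨hxX, hxR⟩
      by_cases hx : x ∈ F '' X
      · obtain ⟨y, hyX, rfl⟩ := hx
        refine Or.inr ⟨y, ⟨hyX, fun hyR => hxR ?_⟩, rfl⟩
        rw [hstep' n]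
        exact Set.mem_image_of_mem F hyR
      · exact Or.inl ⟨hxX, hx⟩
  -- The set of "bad" points: points of Ω mapping into S but not in S themselves.
  set Bad : Set (Fin N → ℂ) := {w | w ∈ Ω ∧ F w ∈ S ∧ w ∉ S} with hBaddef
  -- Every bad point has a backward chain ending outside F '' Ω.
  have hBadwit : ∀ w, ∃ c, w ∈ Bad →
      c ∈ Ω ∧ c ∉ F '' Ω ∧ ∃ h : ℕ, F^[h] c = w := by
    intro w
    by_cases hw : w ∈ Bad
    · obtain ⟨hwΩ, hwF, hwS⟩ := hw
      have hex : ∃ m : ℕ, w ∉ F^[m] '' Ω := by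
        by_contra hc
        push_neg at hc
        exact hwS ((hmemS w).2 fun k _ => hc k)
      have hm0 : Nat.find hex ≠ 0 := by
        intro h0
        have h := Nat.find_spec hex
        rw [h0, hΩ0] at h
        exact h hwΩ
      obtain ⟨h, hh⟩ : ∃ h, Nat.find hex = h + 1 := ⟨Nat.find hex - 1, by omega⟩
      have hwh : w ∈ F^[h] '' Ω := by
        by_contra hc
        exact Nat.find_min hex (by omega) hc
      obtain ⟨c, hcΩ, hc⟩ := hwh
      refine ⟨c, fun _ => ⟨hcΩ, ?_, h, hc⟩⟩
      intro hcF
      have hspec := Nat.find_spec hex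
      rw [hh, hstep h] at hspec
      exact hspec (hc ▸ Set.mem_image_of_mem (F^[h]) hcF)
    · exact ⟨w, fun h => absurd h hw⟩
  choose cfun hcfun using hBadwit
  -- Chains of distinct bad points cannot share their root.
  have haux : ∀ w w', w ∈ Bad → w' ∈ Bad → ∀ (c : Fin N → ℂ) (h h' : ℕ),
      F^[h] c = w → F^[h'] c = w' → h ≤ h' → w = w' := by
    intro w w' hw hw' c h h' hch hch' hle
    obtain ⟨d, rfl⟩ := Nat.exists_eq_add_of_le hle
    rw [Nat.add_comm h d, Function.iterate_add_apply, hch] at hch'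
    cases d with
    | zero => simpa using hch'
    | succ e =>
      rw [Function.iterate_succ_apply] at hch'
      exact absurd (hch' ▸ hFiter e (F w) hw.2.1) hw'.2.2
  have hBadfin : Bad.Finite := by
    have himg : cfun '' Bad ⊆ X \ F^[1] '' Ω := by
      rintro _ ⟨w, hw, rfl⟩
      obtain ⟨hcΩ, hcF, -⟩ := hcfun w hw
      refine ⟨hΩX hcΩ, ?_⟩
      simpa using hcF
    refine Set.Finite.of_finite_image ((hEfin 1).subset himg) ?_
    intro w hw w' hw' hcc
    obtain ⟨-, -, h, hch⟩ := hcfun w hw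
    obtain ⟨-, -, h', hch'⟩ := hcfun w' hw'
    rw [← hcc] at hch'
    rcases le_total h h' with hle | hle
    · exact haux w w' hw hw' (cfun w) h h' hch hch' hle
    · exact (haux w' w hw' hw (cfun w) h' h hch' hch hle).symm
  -- A uniform bound: beyond level H there are no bad points.
  have hmex : ∀ w, ∃ m : ℕ, w ∈ Bad → w ∉ F^[m] '' Ω := by
    intro w
    by_cases hw : w ∈ Bad
    · have hex : ∃ m : ℕ, w ∉ F^[m] '' Ω := by
        by_contra hc
        push_neg at hc
        exact hw.2.2 ((hmemS w).2 fun k _ => hc k)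
      obtain ⟨m, hm⟩ := hex
      exact ⟨m, fun _ => hm⟩
    · exact ⟨0, fun h => absurd h hw⟩
  choose mfun hmfun using hmex
  obtain ⟨H, hH⟩ := (hBadfin.image mfun).bddAbove
  -- KEY: a point of level H whose image is in S is itself in S.
  have hkey : ∀ w, w ∈ F^[H] '' Ω → F w ∈ S → w ∈ S := by
    intro w hwR hwF
    by_contra hwS
    have hwBad : w ∈ Bad := ⟨hsubΩ H hwR, hwF, hwS⟩
    have h1 : mfun w ≤ H := hH (Set.mem_image_of_mem mfun hwBad)
    exact hmfun w hwBad (hmono (mfun w) H h1 hwR)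
  -- Part 1 : F '' S = S.
  have hpart1 : F '' S = S := by
    apply Set.Subset.antisymm
    · rintro _ ⟨z, hz, rfl⟩
      exact hFS z hz
    · intro z hz
      have hz' : z ∈ F^[H+1] '' Ω := (hmemS z).1 hz (H+1) (Nat.succ_pos H)
      rw [hstep' H] at hz'
      obtain ⟨w, hw, rfl⟩ := hz'
      exact ⟨w, hkey w hw hz, rfl⟩
  refine ⟨hpart1, ?_⟩
  -- Part 2 : openness of the restriction to S.
  intro U hU
  have hpt : ∀ z, ∃ V, IsOpen V ∧
      (z ∈ F '' (U ∩ S) → z ∈ V ∧ V ∩ S ⊆ F '' (U ∩ S)) := by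
    intro z
    by_cases hz : z ∈ F '' (U ∩ S)
    · obtain ⟨y, ⟨hyU, hyS⟩, rfl⟩ := hz
      have hEc : IsClosed (X \ F^[H] '' Ω) := (hEfin H).isClosed
      have hyE : y ∈ (X \ F^[H] '' Ω)ᶜ := fun hmem => hmem.2 (hSR H hyS)
      obtain ⟨ε, hε, hball⟩ :=
        Metric.isOpen_iff.mp (hU.inter hEc.isOpen_compl) y ⟨hyU, hyE⟩
      have hBU : Metric.ball y ε ⊆ U := fun _ hw => (hball hw).1
      have hBR : ∀ w, w ∈ Metric.ball y ε → w ∈ X → w ∈ F^[H] '' Ω := by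
        intro w hwB hwX
        by_contra hc
        exact (hball hwB).2 ⟨hwX, hc⟩
      have hO : IsOpen ((Subtype.val : X → Fin N → ℂ) ⁻¹' Metric.ball y ε) :=
        Metric.isOpen_ball.preimage continuous_subtype_val
      have hgO := hopen _ hO
      obtain ⟨t, ht, hteq⟩ := isOpen_induced_iff.mp hgO
      have hmemt : ∀ w, w ∈ Metric.ball y ε → ∀ hwX : w ∈ X, F w ∈ t := by
        intro w hwB hwX
        have hmem : (⟨F w, hmaps hwX⟩ : X) ∈ Subtype.val ⁻¹' t := by
          rw [hteq]
          exact ⟨⟨w, hwX⟩, hwB, rfl⟩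
        exact hmem
      have himg : ∀ z', z' ∈ t → z' ∈ X →
          ∃ w, w ∈ Metric.ball y ε ∧ w ∈ X ∧ F w = z' := by
        intro z' hzt hzX
        have hmem : (⟨z', hzX⟩ : X) ∈
            Set.MapsTo.restrict F X X hmaps '' (Subtype.val ⁻¹' Metric.ball y ε) := by
          rw [← hteq]
          exact hzt
        obtain ⟨⟨w, hwX⟩, hwB, heq⟩ := hmem
        exact ⟨w, hwB, hwX, congrArg Subtype.val heq⟩
      refine ⟨t, ht, fun _ => ⟨?_, ?_⟩⟩
      · exact hmemt y (Metric.mem_ball_self hε) (hSX hyS)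
      · rintro z' ⟨hzt, hzS⟩
        obtain ⟨w, hwB, hwX, rfl⟩ := himg z' hzt (hSX hzS)
        exact ⟨w, ⟨hBU hwB, hkey w (hBR w hwB hwX) hzS⟩, rfl⟩
    · exact ⟨∅, isOpen_empty, fun h => absurd h hz⟩
  choose Vf hVopen hVspec using hpt
  refine ⟨⋃ z ∈ F '' (U ∩ S), Vf z, isOpen_biUnion fun z _ => hVopen z, ?_⟩
  apply Set.Subset.antisymm
  · intro z hz
    refine ⟨Set.mem_biUnion hz (hVspec z hz).1, ?_⟩
    obtain ⟨y, hy, rfl⟩ := hz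
    exact hFS y hy.2
  · rintro z ⟨hzV, hzS⟩
    obtain ⟨z₀, hz₀, hzV'⟩ := Set.mem_iUnion₂.mp hzV
    exact (hVspec z₀ hz₀).2 ⟨hzV', hzS⟩
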